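/- (Best rank-j positive semidefinite approximation; MLE of the signal matrix for known σ.) Let n ≥ 1 and let X be a real symmetric n×n matrix with spectral decomposition X = Σ_{i=1}^{n} ℓ_i v_i v_iᵀ, where ℓ_1 ≥ ⋯ ≥ ℓ_n are the eigenvalues and v_1, …, v_n are orthonormal eigenvectors. Fix 0 ≤ j ≤ n and define Â_j = Σ_{i=1}^{j} max(ℓ_i, 0) v_i v_iᵀ. Then for every real symmetric positive semidefinite n×n matrix B with rank(B) ≤ j, one has ‖X − Â_j‖_F ≤ ‖X − B‖_F, where ‖M‖_F² = Σ_{a,b} M_{ab}² denotes the squared Frobenius norm. -/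

import Mathlib

open Finset

lemma ip_sum {n : ℕ} (S T : Finset (Fin n)) (c d : Fin n → ℝ) (u w : Fin n → Fin n → ℝ) :
    ∑ a, ∑ b, (∑ i ∈ S, c i * (u i a * u i b)) * (∑ k ∈ T, d k * (w k a * w k b))
      = ∑ i ∈ S, ∑ k ∈ T, c i * d k * (∑ a, u i a * w k a) ^ 2 := by
  have h : ∀ a b : Fin n,
      (∑ i ∈ S, c i * (u i a * u i b)) * (∑ k ∈ T, d k * (w k a * w k b))
        = ∑ i ∈ S, ∑ k ∈ T, (c i * d k) * ((u i a * w k a) * (u i b * w k b)) := by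
    intro a b
    rw [Finset.sum_mul_sum]
    exact Finset.sum_congr rfl fun i _ => Finset.sum_congr rfl fun k _ => by ring
  simp only [h]
  calc ∑ a, ∑ b, ∑ i ∈ S, ∑ k ∈ T, (c i * d k) * ((u i a * w k a) * (u i b * w k b))
      = ∑ a, ∑ i ∈ S, ∑ b, ∑ k ∈ T, (c i * d k) * ((u i a * w k a) * (u i b * w k b)) :=
        Finset.sum_congr rfl fun a _ => Finset.sum_comm
    _ = ∑ i ∈ S, ∑ a, ∑ b, ∑ k ∈ T, (c i * d k) * ((u i a * w k a) * (u i b * w k b)) :=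
        Finset.sum_comm
    _ = ∑ i ∈ S, ∑ a, ∑ k ∈ T, ∑ b, (c i * d k) * ((u i a * w k a) * (u i b * w k b)) :=
        Finset.sum_congr rfl fun i _ => Finset.sum_congr rfl fun a _ => Finset.sum_comm
    _ = ∑ i ∈ S, ∑ k ∈ T, ∑ a, ∑ b, (c i * d k) * ((u i a * w k a) * (u i b * w k b)) :=
        Finset.sum_congr rfl fun i _ => Finset.sum_comm
    _ = ∑ i ∈ S, ∑ k ∈ T, c i * d k * (∑ a, u i a * w k a) ^ 2 := by
        refine Finset.sum_congr rfl fun i _ => Finset.sum_congr rfl fun k _ => ?_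
        rw [sq, Finset.sum_mul_sum, Finset.mul_sum]
        refine Finset.sum_congr rfl fun a _ => ?_
        rw [Finset.mul_sum]

lemma spectral_entries {n : ℕ} (B : Matrix (Fin n) (Fin n) ℝ) (hB : B.PosSemidef) :
    ∃ (μ : Fin n → ℝ) (w : Fin n → Fin n → ℝ),
      (∀ k, 0 ≤ μ k) ∧
      (∀ k k', ∑ a, w k a * w k' a = if k = k' then 1 else 0) ∧
      (∀ a b, ∑ k, w k a * w k b = if a = b then 1 else 0) ∧
      (∀ a b, B a b = ∑ k, μ k * (w k a * w k b)) ∧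
      ((Finset.univ.filter (fun k => μ k ≠ 0)).card : ℕ∞) = (B.rank : ℕ∞) := by
  have hH := hB.1
  set U : Matrix (Fin n) (Fin n) ℝ := (Matrix.IsHermitian.eigenvectorUnitary hH : Matrix (Fin n) (Fin n) ℝ) with hU
  refine ⟨hH.eigenvalues, fun k a => U a k, fun k => hB.eigenvalues_nonneg k, ?_, ?_, ?_, ?_⟩
  · intro k k'
    have h1 : star U * U = 1 := Matrix.mem_unitaryGroup_iff'.mp (Matrix.IsHermitian.eigenvectorUnitary hH).2
    have := congrArg (fun M => M k k') h1
    simp only [Matrix.mul_apply, Matrix.one_apply, Matrix.star_apply, star_trivial] at this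
    simpa [mul_comm] using this
  · intro a b
    have h1 : U * star U = 1 := Matrix.mem_unitaryGroup_iff.mp (Matrix.IsHermitian.eigenvectorUnitary hH).2
    have := congrArg (fun M => M a b) h1
    simp only [Matrix.mul_apply, Matrix.one_apply, Matrix.star_apply, star_trivial] at this
    simpa [mul_comm] using this
  · intro a b
    have hs := hH.spectral_theorem
    rw [Unitary.conjStarAlgAut_apply] at hs
    have := congrArg (fun M => M a b) hs
    simp only [Matrix.mul_apply, Matrix.diagonal_apply, Matrix.star_apply, star_trivial,
      Function.comp_apply, RCLike.ofReal_real_eq_id, id_eq] at this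
    rw [this]
    refine Finset.sum_congr rfl fun k _ => ?_
    simp only [mul_ite, mul_zero, Finset.sum_ite_eq', Finset.mem_univ, if_true]
    ring
  · rw [hH.rank_eq_card_non_zero_eigs]
    norm_cast
    simp [Fintype.card_subtype]

lemma weighted_jensen {n : ℕ} (c x : Fin n → ℝ) (hc : ∀ i, 0 ≤ c i) (hsum : ∑ i, c i = 1) :
    (∑ i, c i * x i) ^ 2 ≤ ∑ i, c i * x i ^ 2 := by
  have := Finset.sum_sq_le_sum_mul_sum_of_sq_eq_mul Finset.univ
    (r := fun i => c i * x i) (f := c) (g := fun i => c i * x i ^ 2)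
    (fun i _ => hc i) (fun i _ => mul_nonneg (hc i) (sq_nonneg _))
    (fun i _ => by ring)
  simpa [hsum] using this

lemma sel {n j : ℕ} (hj : j ≤ n) (g t : Fin n → ℝ) (hg0 : ∀ i, 0 ≤ g i)
    (hganti : ∀ i i' : Fin n, i ≤ i' → g i' ≤ g i)
    (ht0 : ∀ i, 0 ≤ t i) (ht1 : ∀ i, t i ≤ 1) (hts : ∑ i, t i ≤ j) :
    ∑ i, t i * g i ≤ ∑ i ∈ Finset.univ.filter (fun i : Fin n => (i : ℕ) < j), g i := by
  classical
  set F := Finset.univ.filter (fun i : Fin n => (i : ℕ) < j) with hF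
  have hcard : F.card = j := by
    have : F = Finset.map (Fin.castLEEmb hj) Finset.univ := by
      ext i
      simp only [hF, Finset.mem_filter, Finset.mem_univ, true_and, Finset.mem_map,
        Fin.castLEEmb_apply]
      constructor
      · intro h; exact ⟨⟨i, h⟩, by simp [Fin.castLE]⟩
      · rintro ⟨k, rfl⟩; exact k.2
    simp [this]
  set γ : ℝ := if h : j < n then g ⟨j, h⟩ else 0 with hγ
  have hγ0 : 0 ≤ γ := by
    rw [hγ]; split
    · exact hg0 _
    · exact le_refl 0
  have hγle : ∀ i : Fin n, (i : ℕ) < j → γ ≤ g i := by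
    intro i hi
    rw [hγ]
    split
    · exact hganti i ⟨j, ‹_›⟩ (by simpa [Fin.le_def] using le_of_lt hi)
    · exact hg0 i
  have hleγ : ∀ i : Fin n, ¬ (i : ℕ) < j → g i ≤ γ := by
    intro i hi
    have hjn : j < n := lt_of_le_of_lt (not_lt.mp hi) i.2
    rw [hγ, dif_pos hjn]
    exact hganti ⟨j, hjn⟩ i (by simpa [Fin.le_def] using not_lt.mp hi)
  have split1 : ∑ i, t i * g i
      = ∑ i ∈ F, t i * g i + ∑ i ∈ Finset.univ.filter (fun i : Fin n => ¬ (i : ℕ) < j), t i * g i := by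
    rw [hF, Finset.sum_filter_add_sum_filter_not]
  have splitT : ∑ i, t i
      = ∑ i ∈ F, t i + ∑ i ∈ Finset.univ.filter (fun i : Fin n => ¬ (i : ℕ) < j), t i := by
    rw [hF, Finset.sum_filter_add_sum_filter_not]
  have h1 : ∑ i ∈ F, (t i * g i - g i) ≤ ∑ i ∈ F, (t i - 1) * γ := by
    refine Finset.sum_le_sum fun i hi => ?_
    have hiF : (i : ℕ) < j := by simpa [hF] using hi
    have e : t i * g i - g i = (t i - 1) * g i := by ring
    rw [e]
    exact mul_le_mul_of_nonpos_left (hγle i hiF) (by linarith [ht1 i])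
  have h2 : ∑ i ∈ Finset.univ.filter (fun i : Fin n => ¬ (i : ℕ) < j), t i * g i
      ≤ ∑ i ∈ Finset.univ.filter (fun i : Fin n => ¬ (i : ℕ) < j), t i * γ := by
    refine Finset.sum_le_sum fun i hi => ?_
    have hiF : ¬ (i : ℕ) < j := by simpa using hi
    exact mul_le_mul_of_nonneg_left (hleγ i hiF) (ht0 i)
  have h3 : (∑ i ∈ F, (t i - 1)) * γ + (∑ i ∈ Finset.univ.filter (fun i : Fin n => ¬ (i : ℕ) < j), t i) * γ ≤ 0 := by
    have e1 : ∑ i ∈ F, (t i - 1) = (∑ i ∈ F, t i) - j := by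
      rw [Finset.sum_sub_distrib, Finset.sum_const, hcard]; simp
    rw [e1]
    have : ((∑ i ∈ F, t i) - j + ∑ i ∈ Finset.univ.filter (fun i : Fin n => ¬ (i : ℕ) < j), t i) ≤ 0 := by
      have := splitT
      linarith
    nlinarith [hγ0]
  rw [Finset.sum_sub_distrib] at h1
  rw [← Finset.sum_mul] at h1
  rw [← Finset.sum_mul] at h2
  linarith


/-- Best rank-`j` positive semidefinite approximation. If the real symmetric matrix `X`
has spectral decomposition `X = Σ ℓ_i v_i v_iᵀ` with `ℓ_1 ≥ ⋯ ≥ ℓ_n` and orthonormal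
`v_i`, and `Â_j = Σ_{i ≤ j} max(ℓ_i, 0) v_i v_iᵀ`, then `‖X − Â_j‖_F ≤ ‖X − B‖_F` for
every positive semidefinite `B` of rank at most `j`. -/
theorem best_rank_j_psd_approximation (n : ℕ) (hn : 1 ≤ n)
    (X : Matrix (Fin n) (Fin n) ℝ) (ℓ : Fin n → ℝ) (v : Fin n → Fin n → ℝ)
    (hmono : ∀ i i' : Fin n, i ≤ i' → ℓ i' ≤ ℓ i)
    (horth : ∀ i i' : Fin n, ∑ a, v i a * v i' a = if i = i' then 1 else 0)
    (hX : X = ∑ i, ℓ i • Matrix.vecMulVec (v i) (v i))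
    (j : ℕ) (hj : j ≤ n)
    (B : Matrix (Fin n) (Fin n) ℝ) (hB : B.PosSemidef) (hrank : B.rank ≤ j) :
    Real.sqrt (∑ a, ∑ b,
        (X a b - (∑ i ∈ Finset.univ.filter (fun i : Fin n => (i : ℕ) < j),
          max (ℓ i) 0 • Matrix.vecMulVec (v i) (v i)) a b) ^ 2)
      ≤ Real.sqrt (∑ a, ∑ b, (X a b - B a b) ^ 2) := by
  classical
  set P := Finset.univ.filter (fun i : Fin n => (i : ℕ) < j) with hP
  -- entrywise formulas
  have hXe : ∀ a b, X a b = ∑ i, ℓ i * (v i a * v i b) := by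
    intro a b
    rw [hX]
    simp [Matrix.sum_apply, Matrix.vecMulVec_apply, mul_assoc]
  have hAe : ∀ a b,
      (∑ i ∈ P, max (ℓ i) 0 • Matrix.vecMulVec (v i) (v i)) a b
        = ∑ i ∈ P, max (ℓ i) 0 * (v i a * v i b) := by
    intro a b
    simp [Matrix.sum_apply, Matrix.vecMulVec_apply, mul_assoc]
  -- completeness of v
  have hvcomp : ∀ a b, ∑ i, v i a * v i b = if a = b then 1 else 0 := by
    set V : Matrix (Fin n) (Fin n) ℝ := Matrix.of v with hV
    have hVVt : V * V.transpose = 1 := by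
      ext i i'
      simpa [Matrix.mul_apply, Matrix.one_apply, hV] using horth i i'
    have hVtV : V.transpose * V = 1 := mul_eq_one_comm.mp hVVt
    intro a b
    have := congrArg (fun M => M a b) hVtV
    simpa [Matrix.mul_apply, Matrix.one_apply, hV, mul_comm] using this
  -- expansion of squared Frobenius distance
  have expand : ∀ M : Matrix (Fin n) (Fin n) ℝ,
      ∑ a, ∑ b, (X a b - M a b) ^ 2
        = (∑ a, ∑ b, X a b * X a b) - 2 * (∑ a, ∑ b, X a b * M a b)
          + ∑ a, ∑ b, M a b * M a b := by
    intro M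
    have h : ∀ a b : Fin n, (X a b - M a b) ^ 2
        = X a b * X a b - 2 * (X a b * M a b) + M a b * M a b := fun a b => by ring
    simp only [h, Finset.sum_add_distrib, Finset.sum_sub_distrib, Finset.mul_sum]
  -- spectral data for B
  obtain ⟨μ, w, hμ0, hworth, hwcomp, hBe, hcardrank⟩ := spectral_entries B hB
  set c : Fin n → Fin n → ℝ := fun i k => (∑ a, v i a * w k a) ^ 2 with hc
  have hc0 : ∀ i k, 0 ≤ c i k := fun i k => sq_nonneg _
  -- row sums of c (fixed k)
  have hrow : ∀ k, ∑ i, c i k = 1 := by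
    intro k
    have := ip_sum (n := n) Finset.univ {k} (fun _ => 1) (fun _ => 1) v w
    simp only [Finset.sum_singleton, one_mul] at this
    rw [hc]
    rw [← this]
    have : ∀ a b : Fin n, (∑ i, v i a * v i b) * (w k a * w k b)
        = (if a = b then 1 else 0) * (w k a * w k b) := fun a b => by rw [hvcomp]
    simp only [this, ite_mul, one_mul, zero_mul]
    simp [Finset.sum_ite_eq, hworth k k]
  -- column sums of c (fixed i)
  have hcol : ∀ i, ∑ k, c i k = 1 := by
    intro i
    have := ip_sum (n := n) {i} Finset.univ (fun _ => 1) (fun _ => 1) v w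
    simp only [Finset.sum_singleton, one_mul] at this
    rw [hc]
    rw [← this]
    have h2 : ∀ a b : Fin n, (v i a * v i b) * (∑ k, w k a * w k b)
        = (v i a * v i b) * (if a = b then 1 else 0) := fun a b => by rw [hwcomp]
    simp only [h2, mul_ite, mul_one, mul_zero]
    simp [Finset.sum_ite_eq, horth i i]
  -- the three inner products for A
  have hipXA : ∑ a, ∑ b, X a b
        * (∑ i ∈ P, max (ℓ i) 0 • Matrix.vecMulVec (v i) (v i)) a b
      = ∑ i ∈ P, (max (ℓ i) 0) ^ 2 := by
    have e : ∑ a, ∑ b, X a b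
        * (∑ i ∈ P, max (ℓ i) 0 • Matrix.vecMulVec (v i) (v i)) a b
        = ∑ a, ∑ b, (∑ i, ℓ i * (v i a * v i b)) * (∑ k ∈ P, max (ℓ k) 0 * (v k a * v k b)) := by
      refine Finset.sum_congr rfl fun a _ => Finset.sum_congr rfl fun b _ => ?_
      rw [hXe, hAe]
    rw [e, ip_sum]
    rw [Finset.sum_comm]
    refine Finset.sum_congr rfl fun k hk => ?_
    rw [Finset.sum_eq_single k]
    · rw [horth k k]
      have : ℓ k * max (ℓ k) 0 = (max (ℓ k) 0) ^ 2 := by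
        rcases le_total (ℓ k) 0 with h | h
        · simp [max_eq_right h]
        · rw [max_eq_left h]; ring
      simp [this]
    · intro i _ hik
      rw [horth i k, if_neg hik]
      simp
    · simp
  have hipAA : ∑ a, ∑ b,
        (∑ i ∈ P, max (ℓ i) 0 • Matrix.vecMulVec (v i) (v i)) a b
        * (∑ i ∈ P, max (ℓ i) 0 • Matrix.vecMulVec (v i) (v i)) a b
      = ∑ i ∈ P, (max (ℓ i) 0) ^ 2 := by
    have e : ∑ a, ∑ b, (∑ i ∈ P, max (ℓ i) 0 • Matrix.vecMulVec (v i) (v i)) a b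
        * (∑ i ∈ P, max (ℓ i) 0 • Matrix.vecMulVec (v i) (v i)) a b
        = ∑ a, ∑ b, (∑ i ∈ P, max (ℓ i) 0 * (v i a * v i b))
            * (∑ k ∈ P, max (ℓ k) 0 * (v k a * v k b)) := by
      refine Finset.sum_congr rfl fun a _ => Finset.sum_congr rfl fun b _ => ?_
      rw [hAe]
    rw [e, ip_sum]
    refine Finset.sum_congr rfl fun i hi => ?_
    rw [Finset.sum_eq_single i]
    · rw [horth i i]
      simp [sq]
    · intro k hk hki
      rw [horth i k, if_neg (fun h => hki h.symm)]
      simp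
    · intro h; exact absurd hi h
  -- inner products for B
  have hipXB : ∑ a, ∑ b, X a b * B a b = ∑ i, ∑ k, ℓ i * μ k * c i k := by
    have e : ∑ a, ∑ b, X a b * B a b
        = ∑ a, ∑ b, (∑ i, ℓ i * (v i a * v i b)) * (∑ k, μ k * (w k a * w k b)) := by
      refine Finset.sum_congr rfl fun a _ => Finset.sum_congr rfl fun b _ => ?_
      rw [hXe, hBe]
    rw [e, ip_sum]
  have hipBB : ∑ a, ∑ b, B a b * B a b = ∑ k, μ k ^ 2 := by
    have e : ∑ a, ∑ b, B a b * B a b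
        = ∑ a, ∑ b, (∑ i, μ i * (w i a * w i b)) * (∑ k, μ k * (w k a * w k b)) := by
      refine Finset.sum_congr rfl fun a _ => Finset.sum_congr rfl fun b _ => ?_
      rw [hBe]
    rw [e, ip_sum]
    refine Finset.sum_congr rfl fun i _ => ?_
    rw [Finset.sum_eq_single i]
    · rw [hworth i i]
      simp [sq]
    · intro k _ hki
      rw [hworth i k, if_neg (fun h => hki h.symm)]
      simp
    · simp
  -- key inequality
  set K := Finset.univ.filter (fun k => μ k ≠ 0) with hK
  have hKcard : K.card ≤ j := by
    have : (K.card : ℕ∞) = (B.rank : ℕ∞) := hcardrank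
    have h2 : K.card = B.rank := by exact_mod_cast this
    omega
  set g : Fin n → ℝ := fun i => (max (ℓ i) 0) ^ 2 with hg
  set t : Fin n → ℝ := fun i => ∑ k ∈ K, c i k with ht
  have key : 2 * (∑ i, ∑ k, ℓ i * μ k * c i k) - ∑ k, μ k ^ 2 ≤ ∑ i ∈ P, g i := by
    have step1 : 2 * (∑ i, ∑ k, ℓ i * μ k * c i k) - ∑ k, μ k ^ 2
        = ∑ k, (2 * μ k * (∑ i, ℓ i * c i k) - μ k ^ 2) := by
      have e : ∑ i, ∑ k, ℓ i * μ k * c i k = ∑ k, μ k * (∑ i, ℓ i * c i k) := by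
        rw [Finset.sum_comm]
        refine Finset.sum_congr rfl fun k _ => ?_
        rw [Finset.mul_sum]
        exact Finset.sum_congr rfl fun i _ => by ring
      rw [e, Finset.sum_sub_distrib, Finset.mul_sum]
      congr 1
      exact Finset.sum_congr rfl fun k _ => by ring
    rw [step1]
    have step2 : ∑ k, (2 * μ k * (∑ i, ℓ i * c i k) - μ k ^ 2)
        = ∑ k ∈ K, (2 * μ k * (∑ i, ℓ i * c i k) - μ k ^ 2) := by
      rw [hK]
      rw [← Finset.sum_filter_add_sum_filter_not Finset.univ (fun k => μ k ≠ 0)]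
      have : ∑ k ∈ Finset.univ.filter (fun k => ¬ μ k ≠ 0),
          (2 * μ k * (∑ i, ℓ i * c i k) - μ k ^ 2) = 0 := by
        refine Finset.sum_eq_zero fun k hk => ?_
        have : μ k = 0 := by simpa using hk
        simp [this]
      rw [this, add_zero]
    rw [step2]
    have step3 : ∀ k ∈ K, 2 * μ k * (∑ i, ℓ i * c i k) - μ k ^ 2 ≤ ∑ i, c i k * g i := by
      intro k _
      set r : ℝ := ∑ i, ℓ i * c i k with hr
      set s : ℝ := ∑ i, c i k * max (ℓ i) 0 with hs
      have hrs : r ≤ s := by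
        refine Finset.sum_le_sum fun i _ => ?_
        rw [mul_comm]
        exact mul_le_mul_of_nonneg_left (le_max_left _ _) (hc0 i k)
      have hs0 : 0 ≤ s :=
        Finset.sum_nonneg fun i _ => mul_nonneg (hc0 i k) (le_max_right _ _)
      have hsq : s ^ 2 ≤ ∑ i, c i k * g i := by
        have := weighted_jensen (fun i => c i k) (fun i => max (ℓ i) 0)
          (fun i => hc0 i k) (hrow k)
        exact this
      nlinarith [hμ0 k, sq_nonneg (s - μ k)]
    calc ∑ k ∈ K, (2 * μ k * (∑ i, ℓ i * c i k) - μ k ^ 2)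
        ≤ ∑ k ∈ K, ∑ i, c i k * g i := Finset.sum_le_sum step3
      _ = ∑ i, t i * g i := by
          rw [Finset.sum_comm]
          refine Finset.sum_congr rfl fun i _ => ?_
          rw [ht, Finset.sum_mul]
      _ ≤ ∑ i ∈ P, g i := by
          refine sel hj g t (fun i => sq_nonneg _) ?_ ?_ ?_ ?_
          · intro i i' hii'
            have h1 : max (ℓ i') 0 ≤ max (ℓ i) 0 :=
              max_le_max (hmono i i' hii') le_rfl
            exact pow_le_pow_left₀ (le_max_right _ _) h1 2
          · intro i
            exact Finset.sum_nonneg fun k _ => hc0 i k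
          · intro i
            calc t i ≤ ∑ k, c i k :=
                  Finset.sum_le_sum_of_subset_of_nonneg (Finset.subset_univ K)
                    (fun k _ _ => hc0 i k)
              _ = 1 := hcol i
          · have : ∑ i, t i = ∑ k ∈ K, ∑ i, c i k := Finset.sum_comm
            rw [this]
            have : ∑ k ∈ K, ∑ i, c i k = ∑ k ∈ K, (1 : ℝ) :=
              Finset.sum_congr rfl fun k _ => hrow k
            rw [this, Finset.sum_const, nsmul_eq_mul, mul_one]
            exact_mod_cast Nat.cast_le.mpr hKcard
  -- put everything together
  have main : ∑ a, ∑ b, (X a b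
        - (∑ i ∈ P, max (ℓ i) 0 • Matrix.vecMulVec (v i) (v i)) a b) ^ 2
      ≤ ∑ a, ∑ b, (X a b - B a b) ^ 2 := by
    rw [expand, expand, hipXA, hipAA, hipXB, hipBB]
    have : ∑ i ∈ P, (max (ℓ i) 0) ^ 2 = ∑ i ∈ P, g i := rfl
    linarith [key]
  exact Real.sqrt_le_sqrt main
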